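/- Preservation of monotone structure by Poisson functionals: for z = (z₁,...,z_m) ∈ [0,∞)^m let Π^{(z)} be a Poisson point process on a measurable space S with intensity Σᵢ zᵢμᵢ, where μ₁,...,μ_m are fixed σ-finite measures, and let g : S → [0,∞) be measurable with ⟨g, Π^{(z)}⟩ := ∫g dΠ^{(z)} a.s. finite. If f : [0,∞)^{n+1} → ℝ is non-decreasing, bounded, and (i,j)-convex for all 1 ≤ i,j ≤ n+1, then the function (x,z) ↦ E[f(x, ⟨g,Π^{(z)}⟩)] on [0,∞)^{n+m} is non-decreasing and (i,j)-convex for all 1 ≤ i,j ≤ n+m. -/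

import Mathlib

open MeasureTheory

private lemma integrable_of_bdd' {α : Type*} [MeasurableSpace α] {C : ℝ} {φ : α → ℝ}
    (hm : Measurable φ) (hb : ∀ w, |φ w| ≤ C) (μ : Measure α) [IsFiniteMeasure μ] :
    Integrable φ μ :=
  ⟨hm.aestronglyMeasurable, HasFiniteIntegral.of_bounded (C := C)
    (Filter.Eventually.of_forall fun w => by simpa using hb w)⟩

private lemma ae_fst_prod' {α β : Type*} [MeasurableSpace α] [MeasurableSpace β]
    {μ : Measure α} {ν : Measure β} [SigmaFinite ν] {p : α → Prop}
    (h : ∀ᵐ a ∂μ, p a) : ∀ᵐ q ∂μ.prod ν, p q.1 := by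
  rw [ae_iff] at h ⊢
  refine measure_mono_null (fun q hq => ?_)
    (show (μ.prod ν) ({a | ¬ p a} ×ˢ (Set.univ : Set β)) = 0 by
      rw [Measure.prod_prod, h, zero_mul])
  exact ⟨hq, trivial⟩

private lemma ae_snd_prod' {α β : Type*} [MeasurableSpace α] [MeasurableSpace β]
    {μ : Measure α} {ν : Measure β} [SigmaFinite ν] {p : β → Prop}
    (h : ∀ᵐ b ∂ν, p b) : ∀ᵐ q ∂μ.prod ν, p q.2 := by
  rw [ae_iff] at h ⊢
  refine measure_mono_null (fun q hq => ?_)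
    (show (μ.prod ν) ((Set.univ : Set α) ×ˢ {b | ¬ p b}) = 0 by
      rw [Measure.prod_prod, h, mul_zero])
  exact ⟨trivial, hq⟩

private lemma integral_fst_prod' {α β : Type*} [MeasurableSpace α] [MeasurableSpace β]
    {μ : Measure α} {ν : Measure β} [SFinite μ] [IsProbabilityMeasure ν]
    {φ : α → ℝ} (hφ : Measurable φ) :
    ∫ q, φ q.1 ∂(μ.prod ν) = ∫ a, φ a ∂μ := by
  have hmap : (μ.prod ν).map Prod.fst = μ := Measure.fst_prod
  calc ∫ q, φ q.1 ∂(μ.prod ν) = ∫ y, φ y ∂((μ.prod ν).map Prod.fst) :=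
        (integral_map measurable_fst.aemeasurable hφ.aestronglyMeasurable).symm
    _ = ∫ a, φ a ∂μ := by rw [hmap]

private lemma four_integral' {α : Type*} [MeasurableSpace α] {μ : Measure α}
    {g1 g2 g3 g4 : α → ℝ} (h1 : Integrable g1 μ) (h2 : Integrable g2 μ)
    (h3 : Integrable g3 μ) (h4 : Integrable g4 μ)
    (hpt : ∀ᵐ t ∂μ, 0 ≤ g1 t - g2 t - g3 t + g4 t) :
    0 ≤ (∫ t, g1 t ∂μ) - (∫ t, g2 t ∂μ) - (∫ t, g3 t ∂μ) + ∫ t, g4 t ∂μ := by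
  have h := integral_nonneg_of_ae hpt
  have h12 : Integrable (fun a => g1 a - g2 a) μ := h1.sub h2
  have h123 : Integrable (fun a => g1 a - g2 a - g3 a) μ := h12.sub h3
  rw [integral_add h123 h4, integral_sub h12 h3, integral_sub h1 h2] at h
  linarith

/-- Lemma `preservation_PPP`: preservation of monotone (directionally convex)
structure by Poisson functionals. Here `ν z` denotes the law of `⟨g, Π^{(z)}⟩`,
characterized by: it is a probability measure supported on `[0,∞)` and the
superposition property `ν (z + z') = law of (sum of independent samples from
ν z and ν z')` (independent Poisson point processes add intensities). If
`f : [0,∞)^{n+1} → ℝ` (written `f x w` with scalar last coordinate `w`) is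
non-decreasing, bounded and `(i,j)`-convex in all pairs of coordinates, then
`(x,z) ↦ E[f(x, ⟨g,Π^{(z)}⟩)] = ∫ w, f x w ∂(ν z)` is non-decreasing and
`(i,j)`-convex in all pairs of its `n + m` coordinates. -/
theorem stmt_11 (n m : ℕ) (hn : 1 ≤ n) (hm : 1 ≤ m)
    (ν : (Fin m → ℝ) → Measure ℝ)
    (hprob : ∀ z : Fin m → ℝ, (∀ l, 0 ≤ z l) → IsProbabilityMeasure (ν z))
    (hsupp : ∀ z : Fin m → ℝ, (∀ l, 0 ≤ z l) → ν z (Set.Iio 0) = 0)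
    (hadd : ∀ z z' : Fin m → ℝ, (∀ l, 0 ≤ z l) → (∀ l, 0 ≤ z' l) →
      ν (z + z') = Measure.map (fun p : ℝ × ℝ => p.1 + p.2) ((ν z).prod (ν z')))
    (f : (Fin n → ℝ) → ℝ → ℝ)
    (hfmeas : ∀ x, Measurable (f x))
    (hfbdd : ∃ C, ∀ x w, |f x w| ≤ C)
    (hfmono : ∀ x x' : Fin n → ℝ, ∀ w w' : ℝ, (∀ l, 0 ≤ x l) → 0 ≤ w →
      (∀ l, x l ≤ x' l) → w ≤ w' → f x w ≤ f x' w')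
    (hconv_xx : ∀ (i j : Fin n) (x : Fin n → ℝ) (w : ℝ), (∀ l, 0 ≤ x l) → 0 ≤ w →
      ∀ h₁ h₂ : ℝ, 0 ≤ h₁ → 0 ≤ h₂ →
      0 ≤ f (x + Pi.single i h₁ + Pi.single j h₂) w - f (x + Pi.single i h₁) w
            - f (x + Pi.single j h₂) w + f x w)
    (hconv_xw : ∀ (i : Fin n) (x : Fin n → ℝ) (w : ℝ), (∀ l, 0 ≤ x l) → 0 ≤ w →
      ∀ h₁ h₂ : ℝ, 0 ≤ h₁ → 0 ≤ h₂ →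
      0 ≤ f (x + Pi.single i h₁) (w + h₂) - f (x + Pi.single i h₁) w
            - f x (w + h₂) + f x w)
    (hconv_ww : ∀ (x : Fin n → ℝ) (w : ℝ), (∀ l, 0 ≤ x l) → 0 ≤ w →
      ∀ h₁ h₂ : ℝ, 0 ≤ h₁ → 0 ≤ h₂ →
      0 ≤ f x (w + h₁ + h₂) - f x (w + h₁) - f x (w + h₂) + f x w) :
    -- the function (x, z) ↦ ∫ w, f x w ∂(ν z) is non-decreasing …
    (∀ (x x' : Fin n → ℝ) (z z' : Fin m → ℝ),
      (∀ l, 0 ≤ x l) → (∀ l, 0 ≤ z l) → (∀ l, x l ≤ x' l) → (∀ l, z l ≤ z' l) →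
      (∫ w, f x w ∂(ν z)) ≤ ∫ w, f x' w ∂(ν z')) ∧
    -- … (i,j)-convex in the first n coordinates …
    (∀ (i j : Fin n) (x : Fin n → ℝ) (z : Fin m → ℝ),
      (∀ l, 0 ≤ x l) → (∀ l, 0 ≤ z l) → ∀ h₁ h₂ : ℝ, 0 ≤ h₁ → 0 ≤ h₂ →
      0 ≤ (∫ w, f (x + Pi.single i h₁ + Pi.single j h₂) w ∂(ν z))
            - (∫ w, f (x + Pi.single i h₁) w ∂(ν z))
            - (∫ w, f (x + Pi.single j h₂) w ∂(ν z)) + ∫ w, f x w ∂(ν z)) ∧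
    -- … (i, n+j)-convex in mixed coordinates …
    (∀ (i : Fin n) (j : Fin m) (x : Fin n → ℝ) (z : Fin m → ℝ),
      (∀ l, 0 ≤ x l) → (∀ l, 0 ≤ z l) → ∀ h₁ h₂ : ℝ, 0 ≤ h₁ → 0 ≤ h₂ →
      0 ≤ (∫ w, f (x + Pi.single i h₁) w ∂(ν (z + Pi.single j h₂)))
            - (∫ w, f (x + Pi.single i h₁) w ∂(ν z))
            - (∫ w, f x w ∂(ν (z + Pi.single j h₂))) + ∫ w, f x w ∂(ν z)) ∧
    -- … and (n+i, n+j)-convex in the last m coordinates.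
    (∀ (i j : Fin m) (x : Fin n → ℝ) (z : Fin m → ℝ),
      (∀ l, 0 ≤ x l) → (∀ l, 0 ≤ z l) → ∀ h₁ h₂ : ℝ, 0 ≤ h₁ → 0 ≤ h₂ →
      0 ≤ (∫ w, f x w ∂(ν (z + Pi.single i h₁ + Pi.single j h₂)))
            - (∫ w, f x w ∂(ν (z + Pi.single i h₁)))
            - (∫ w, f x w ∂(ν (z + Pi.single j h₂))) + ∫ w, f x w ∂(ν z)) := by
  
  obtain ⟨C, hC⟩ := hfbdd
  have hsingle : ∀ (k : Fin m) (h : ℝ), 0 ≤ h → ∀ l, 0 ≤ (Pi.single k h : Fin m → ℝ) l := by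
    intro k h hh l
    rcases eq_or_ne l k with rfl | hne
    · simpa using hh
    · simp [Pi.single_apply, hne]
  have hae : ∀ z : Fin m → ℝ, (∀ l, 0 ≤ z l) → ∀ᵐ w ∂ν z, 0 ≤ w := by
    intro z hz
    rw [ae_iff]
    have hset : {w : ℝ | ¬ 0 ≤ w} = Set.Iio 0 := by ext w; simp [not_le]
    rw [hset]; exact hsupp z hz
  have rep : ∀ z z' : Fin m → ℝ, (∀ l, 0 ≤ z l) → (∀ l, 0 ≤ z' l) →
      ∀ φ : ℝ → ℝ, Measurable φ →
      ∫ w, φ w ∂ν (z + z') = ∫ p : ℝ × ℝ, φ (p.1 + p.2) ∂((ν z).prod (ν z')) := by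
    intro z z' hz hz' φ hφ
    rw [hadd z z' hz hz']
    exact integral_map measurable_add.aemeasurable hφ.aestronglyMeasurable
  refine ⟨?_, ?_, ?_, ?_⟩
  · -- monotonicity
    intro x x' z z' hx hz hxx' hzz'
    haveI := hprob z hz
    have hx' : ∀ l, 0 ≤ x' l := fun l => le_trans (hx l) (hxx' l)
    have hd : ∀ l, 0 ≤ (z' - z) l := fun l => sub_nonneg.2 (hzz' l)
    haveI := hprob (z' - z) hd
    have hz'' : z' = z + (z' - z) := by
      funext l; show z' l = z l + (z' l - z l); ring
    have step1 : (∫ w, f x w ∂ν z) ≤ ∫ w, f x' w ∂ν z := by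
      refine integral_mono_ae (integrable_of_bdd' (hfmeas x) (hC x) _)
        (integrable_of_bdd' (hfmeas x') (hC x') _) ?_
      filter_upwards [hae z hz] with w hw
      exact hfmono x x' w w hx hw hxx' le_rfl
    have step2 : (∫ w, f x' w ∂ν z) ≤ ∫ w, f x' w ∂ν z' := by
      rw [hz'', rep z (z' - z) hz hd (f x') (hfmeas x'),
        ← integral_fst_prod' (μ := ν z) (ν := ν (z' - z)) (hfmeas x')]
      refine integral_mono_ae
        (integrable_of_bdd' ((hfmeas x').comp measurable_fst) (fun p => hC x' p.1) _)
        (integrable_of_bdd' ((hfmeas x').comp measurable_add) (fun p => hC x' _) _) ?_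
      filter_upwards [ae_fst_prod' (hae z hz), ae_snd_prod' (hae (z' - z) hd)] with p hp1 hp2
      exact hfmono x' x' p.1 (p.1 + p.2) hx' hp1 (fun l => le_rfl) (le_add_of_nonneg_right hp2)
    exact le_trans step1 step2
  · -- (i,j)-convexity in x
    intro i j x z hx hz h₁ h₂ hh₁ hh₂
    haveI := hprob z hz
    refine four_integral' (integrable_of_bdd' (hfmeas _) (hC _) _)
      (integrable_of_bdd' (hfmeas _) (hC _) _) (integrable_of_bdd' (hfmeas _) (hC _) _)
      (integrable_of_bdd' (hfmeas _) (hC _) _) ?_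
    filter_upwards [hae z hz] with w hw
    exact hconv_xx i j x w hx hw h₁ h₂ hh₁ hh₂
  · -- mixed convexity
    intro i j x z hx hz h₁ h₂ hh₁ hh₂
    haveI := hprob z hz
    have he : ∀ l, 0 ≤ (Pi.single j h₂ : Fin m → ℝ) l := hsingle j h₂ hh₂
    haveI := hprob _ he
    have R1 := rep z (Pi.single j h₂) hz he (f (x + Pi.single i h₁)) (hfmeas _)
    have R2 := rep z (Pi.single j h₂) hz he (f x) (hfmeas _)
    have R3 := integral_fst_prod' (μ := ν z) (ν := ν (Pi.single j h₂)) (hfmeas (x + Pi.single i h₁))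
    have R4 := integral_fst_prod' (μ := ν z) (ν := ν (Pi.single j h₂)) (hfmeas x)
    rw [R1, R2, ← R3, ← R4]
    refine four_integral'
      (integrable_of_bdd' ((hfmeas _).comp measurable_add) (fun p => hC _ _) _)
      (integrable_of_bdd' ((hfmeas _).comp measurable_fst) (fun p => hC _ _) _)
      (integrable_of_bdd' ((hfmeas _).comp measurable_add) (fun p => hC _ _) _)
      (integrable_of_bdd' ((hfmeas _).comp measurable_fst) (fun p => hC _ _) _) ?_
    filter_upwards [ae_fst_prod' (hae z hz), ae_snd_prod' (hae _ he)] with p hp1 hp2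
    exact hconv_xw i x p.1 hx hp1 h₁ p.2 hh₁ hp2
  · -- (n+i, n+j)-convexity
    intro i j x z hx hz h₁ h₂ hh₁ hh₂
    haveI := hprob z hz
    have he1 : ∀ l, 0 ≤ (Pi.single i h₁ : Fin m → ℝ) l := hsingle i h₁ hh₁
    have he2 : ∀ l, 0 ≤ (Pi.single j h₂ : Fin m → ℝ) l := hsingle j h₂ hh₂
    haveI := hprob _ he1
    haveI := hprob _ he2
    have hze1 : ∀ l, 0 ≤ (z + Pi.single i h₁ : Fin m → ℝ) l := fun l => add_nonneg (hz l) (he1 l)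
    haveI := hprob _ hze1
    set μ3 : Measure ((ℝ × ℝ) × ℝ) :=
      ((ν z).prod (ν (Pi.single i h₁))).prod (ν (Pi.single j h₂)) with hμ3
    have hfst : Measure.map Prod.fst ((ν z).prod (ν (Pi.single i h₁))) = ν z := by
      rw [Measure.map_fst_prod]; simp
    have E1 : (∫ w, f x w ∂ν (z + Pi.single i h₁ + Pi.single j h₂))
        = ∫ t, f x (t.1.1 + t.1.2 + t.2) ∂μ3 := by
      have Ra := rep (z + Pi.single i h₁) (Pi.single j h₂) hze1 he2 (f x) (hfmeas x)
      rw [Ra]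
      have hmap := Measure.map_prod_map (f := fun p : ℝ × ℝ => p.1 + p.2) (g := (id : ℝ → ℝ))
        ((ν z).prod (ν (Pi.single i h₁))) (ν (Pi.single j h₂)) measurable_add measurable_id
      rw [Measure.map_id, ← hadd z (Pi.single i h₁) hz he1] at hmap
      rw [hmap]
      exact integral_map (measurable_add.prodMap measurable_id).aemeasurable
        ((hfmeas x).comp measurable_add).aestronglyMeasurable
    have E2 : (∫ w, f x w ∂ν (z + Pi.single i h₁))
        = ∫ t, f x (t.1.1 + t.1.2) ∂μ3 := by
      have Rb := rep z (Pi.single i h₁) hz he1 (f x) (hfmeas x)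
      rw [Rb]
      exact (integral_fst_prod' (μ := (ν z).prod (ν (Pi.single i h₁)))
        (ν := ν (Pi.single j h₂)) ((hfmeas x).comp measurable_add)).symm
    have E3 : (∫ w, f x w ∂ν (z + Pi.single j h₂))
        = ∫ t, f x (t.1.1 + t.2) ∂μ3 := by
      have Rc := rep z (Pi.single j h₂) hz he2 (f x) (hfmeas x)
      rw [Rc]
      have hmap := Measure.map_prod_map (f := (Prod.fst : ℝ × ℝ → ℝ)) (g := (id : ℝ → ℝ))
        ((ν z).prod (ν (Pi.single i h₁))) (ν (Pi.single j h₂)) measurable_fst measurable_id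
      rw [Measure.map_id, hfst] at hmap
      rw [hmap]
      exact integral_map (measurable_fst.prodMap measurable_id).aemeasurable
        ((hfmeas x).comp measurable_add).aestronglyMeasurable
    have E4 : (∫ w, f x w ∂ν z) = ∫ t, f x t.1.1 ∂μ3 := by
      have Rd := integral_fst_prod' (μ := ν z) (ν := ν (Pi.single i h₁)) (hfmeas x)
      rw [← Rd]
      exact (integral_fst_prod' (μ := (ν z).prod (ν (Pi.single i h₁)))
        (ν := ν (Pi.single j h₂)) ((hfmeas x).comp measurable_fst)).symm
    rw [E1, E2, E3, E4]
    refine four_integral'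
      (integrable_of_bdd' ((hfmeas x).comp (by fun_prop)) (fun t => hC _ _) _)
      (integrable_of_bdd' ((hfmeas x).comp (by fun_prop)) (fun t => hC _ _) _)
      (integrable_of_bdd' ((hfmeas x).comp (by fun_prop)) (fun t => hC _ _) _)
      (integrable_of_bdd' ((hfmeas x).comp (by fun_prop)) (fun t => hC _ _) _) ?_
    filter_upwards [ae_fst_prod' (ae_fst_prod' (hae z hz)),
      ae_fst_prod' (ae_snd_prod' (hae _ he1)), ae_snd_prod' (hae _ he2)] with t h11 h12 h2
    exact hconv_ww x t.1.1 hx h11 t.1.2 t.2 h12 h2
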